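/- Let N ≥ 2 be an integer and let (μ_{ij})_{i≠j} be fixed real numbers. Define f_L : ℝ^N → ℝ^N by f_L(x)_i = 2x_i + L·sin(2πx_i) + Σ_{j≠i} μ_{ij}·sin(2π(x_j − x_i)). Then there exist constants C > 0 and L₀ > 0 (depending only on N and max_{ij}|μ_{ij}|) such that for all L ≥ L₀ and all x ∈ ℝ^N: |det(L^{-1}·Df_L(x)) − (2π)^N · ∏_{i=1}^N cos(2πx_i)| ≤ C/L. -/

import Mathlib

open scoped Real
open Real Finset

private lemma prod_sub_bound {ι : Type*} [DecidableEq ι] (s : Finset ι) (a b : ι → ℝ)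
    (M ε : ℝ) (hM : 1 ≤ M) (hε : 0 ≤ ε)
    (ha : ∀ i ∈ s, |a i| ≤ M) (hb : ∀ i ∈ s, |b i| ≤ M)
    (hab : ∀ i ∈ s, |a i - b i| ≤ ε) :
    |∏ i ∈ s, a i - ∏ i ∈ s, b i| ≤ s.card * M ^ s.card * ε := by
  induction s using Finset.induction_on with
  | empty => simp [hε]
  | @insert i s hi ih =>
    have ih' := ih (fun k hk => ha k (Finset.mem_insert_of_mem hk))
      (fun k hk => hb k (Finset.mem_insert_of_mem hk))
      (fun k hk => hab k (Finset.mem_insert_of_mem hk))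
    rw [Finset.prod_insert hi, Finset.prod_insert hi, Finset.card_insert_of_notMem hi]
    have key : a i * ∏ k ∈ s, a k - b i * ∏ k ∈ s, b k
        = a i * (∏ k ∈ s, a k - ∏ k ∈ s, b k) + (a i - b i) * ∏ k ∈ s, b k := by ring
    rw [key]
    have hQ : |∏ k ∈ s, b k| ≤ M ^ s.card := by
      rw [Finset.abs_prod]
      calc ∏ k ∈ s, |b k| ≤ ∏ _k ∈ s, M :=
            Finset.prod_le_prod (fun _ _ => abs_nonneg _)
              (fun k hk => hb k (Finset.mem_insert_of_mem hk))
        _ = M ^ s.card := Finset.prod_const M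
    have h1 : |a i * (∏ k ∈ s, a k - ∏ k ∈ s, b k)| ≤ M * (s.card * M ^ s.card * ε) := by
      rw [abs_mul]
      exact mul_le_mul (ha i (Finset.mem_insert_self i s)) ih' (abs_nonneg _) (by linarith)
    have h2 : |(a i - b i) * ∏ k ∈ s, b k| ≤ ε * M ^ s.card := by
      rw [abs_mul]
      exact mul_le_mul (hab i (Finset.mem_insert_self i s)) hQ (abs_nonneg _) hε
    have hMn : (0:ℝ) < M ^ s.card := by positivity
    have hstep : ε * M ^ s.card ≤ ε * M ^ s.card * M :=
      le_mul_of_one_le_right (by positivity) hM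
    calc |a i * (∏ k ∈ s, a k - ∏ k ∈ s, b k) + (a i - b i) * ∏ k ∈ s, b k|
        ≤ |a i * (∏ k ∈ s, a k - ∏ k ∈ s, b k)| + |(a i - b i) * ∏ k ∈ s, b k| := abs_add_le _ _
      _ ≤ M * (s.card * M ^ s.card * ε) + ε * M ^ s.card := add_le_add h1 h2
      _ ≤ ((s.card : ℝ) + 1) * M ^ (s.card + 1) * ε := by
          rw [pow_succ]; nlinarith [hstep]
      _ = ((s.card + 1 : ℕ) : ℝ) * M ^ (s.card + 1) * ε := by push_cast; ring

private lemma det_sub_bound {N : ℕ} (A B : Matrix (Fin N) (Fin N) ℝ) (M ε : ℝ)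
    (hM : 1 ≤ M) (hε : 0 ≤ ε)
    (hA : ∀ i j, |A i j| ≤ M) (hB : ∀ i j, |B i j| ≤ M)
    (hAB : ∀ i j, |A i j - B i j| ≤ ε) :
    |A.det - B.det| ≤ (Nat.factorial N : ℝ) * (N * M ^ N * ε) := by
  rw [Matrix.det_apply', Matrix.det_apply', ← Finset.sum_sub_distrib]
  refine (Finset.abs_sum_le_sum_abs _ _).trans ?_
  have hterm : ∀ σ : Equiv.Perm (Fin N),
      |(Equiv.Perm.sign σ : ℝ) * ∏ i, A (σ i) i - (Equiv.Perm.sign σ : ℝ) * ∏ i, B (σ i) i|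
        ≤ N * M ^ N * ε := by
    intro σ
    rw [← mul_sub, abs_mul]
    have hs : |(Equiv.Perm.sign σ : ℝ)| = 1 := by
      rcases Int.units_eq_one_or (Equiv.Perm.sign σ) with h | h <;> simp [h]
    rw [hs, one_mul]
    have := prod_sub_bound (Finset.univ : Finset (Fin N)) (fun i => A (σ i) i)
      (fun i => B (σ i) i) M ε hM hε (fun i _ => hA _ _) (fun i _ => hB _ _)
      (fun i _ => hAB _ _)
    simpa using this
  calc ∑ σ : Equiv.Perm (Fin N),
        |(Equiv.Perm.sign σ : ℝ) * ∏ i, A (σ i) i - (Equiv.Perm.sign σ : ℝ) * ∏ i, B (σ i) i|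
      ≤ ∑ _σ : Equiv.Perm (Fin N), N * M ^ N * ε :=
        Finset.sum_le_sum (fun σ _ => hterm σ)
    _ = (Nat.factorial N : ℝ) * (N * M ^ N * ε) := by
        rw [Finset.sum_const, Finset.card_univ, Fintype.card_perm, Fintype.card_fin, nsmul_eq_mul]

private def Pr {N : ℕ} (k : Fin N) : (Fin N → ℝ) →L[ℝ] ℝ :=
  ContinuousLinearMap.proj k

private lemma Pr_apply {N : ℕ} (k : Fin N) (y : Fin N → ℝ) : Pr k y = y k := rfl

private lemma entry_formula (N : ℕ) (μ : Fin N → Fin N → ℝ) (L : ℝ) (x : Fin N → ℝ)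
    (i j : Fin N) :
    fderiv ℝ (fun y : Fin N → ℝ => 2 * y i + L * Real.sin (2 * π * y i) +
      ∑ j', if j' = i then 0 else μ i j' * Real.sin (2 * π * (y j' - y i))) x (Pi.single j 1) =
    (if i = j then 2 + L * (2 * π * Real.cos (2 * π * x i)) -
        ∑ j', (if j' = i then 0 else μ i j' * (2 * π * Real.cos (2 * π * (x j' - x i))))
     else μ i j * (2 * π * Real.cos (2 * π * (x j - x i)))) := by
  have hproj : ∀ k : Fin N, HasFDerivAt (fun y : Fin N → ℝ => y k) (Pr k) x :=
    fun k => hasFDerivAt_apply k x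
  have h1 : HasFDerivAt (fun y : Fin N → ℝ => 2 * y i) ((2:ℝ) • Pr i) x := (hproj i).const_mul 2
  have hinner : HasFDerivAt (fun y : Fin N → ℝ => 2 * π * y i) ((2 * π) • Pr i) x :=
    (hproj i).const_mul _
  have h2 : HasFDerivAt (fun y : Fin N → ℝ => L * Real.sin (2 * π * y i))
      (L • (Real.cos (2 * π * x i) • ((2 * π) • Pr i))) x :=
    ((Real.hasDerivAt_sin _).comp_hasFDerivAt x hinner).const_mul L
  have h3 : ∀ j' : Fin N, HasFDerivAt
      (fun y : Fin N → ℝ => if j' = i then (0:ℝ) else μ i j' * Real.sin (2 * π * (y j' - y i)))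
      (if j' = i then (0 : (Fin N → ℝ) →L[ℝ] ℝ) else
        μ i j' • (Real.cos (2 * π * (x j' - x i)) • ((2 * π) • (Pr j' - Pr i)))) x := by
    intro j'
    by_cases h : j' = i
    · simpa [h] using hasFDerivAt_const (0:ℝ) x
    · simp only [h, if_false]
      have hin : HasFDerivAt (fun y : Fin N → ℝ => 2 * π * (y j' - y i))
          ((2 * π) • (Pr j' - Pr i)) x := (((hproj j').sub (hproj i)).const_mul _)
      exact ((Real.hasDerivAt_sin _).comp_hasFDerivAt x hin).const_mul _
  have hsum := HasFDerivAt.fun_sum (u := Finset.univ) (fun j' _ => h3 j')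
  have htot := (h1.fun_add h2).fun_add hsum
  rw [htot.fderiv]
  simp only [ContinuousLinearMap.add_apply, ContinuousLinearMap.smul_apply,
    ContinuousLinearMap.sum_apply, ContinuousLinearMap.sub_apply,
    Pr_apply, Pi.single_apply, smul_eq_mul]
  by_cases hij : i = j
  · subst hij
    simp only [if_pos rfl]
    have hterm : ∀ j' : Fin N,
        ((if j' = i then (0 : (Fin N → ℝ) →L[ℝ] ℝ) else
          μ i j' • (Real.cos (2 * π * (x j' - x i)) • ((2 * π) • (Pr j' - Pr i))))
          (Pi.single i 1))
        = -(if j' = i then 0 else μ i j' * (2 * π * Real.cos (2 * π * (x j' - x i)))) := by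
      intro j'
      by_cases h : j' = i
      · simp [h]
      · simp only [h, if_false, ContinuousLinearMap.smul_apply, ContinuousLinearMap.sub_apply,
          Pr_apply, Pi.single_apply, smul_eq_mul]
        simp [h]
        exact Or.inl (by ring)
    rw [Finset.sum_congr rfl (fun j' _ => hterm j')]
    rw [Finset.sum_neg_distrib]
    simp
    ring
  · simp only [if_neg hij]
    have hterm : ∀ j' : Fin N,
        ((if j' = i then (0 : (Fin N → ℝ) →L[ℝ] ℝ) else
          μ i j' • (Real.cos (2 * π * (x j' - x i)) • ((2 * π) • (Pr j' - Pr i))))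
          (Pi.single j 1))
        = (if j' = j then μ i j * (2 * π * Real.cos (2 * π * (x j - x i))) else 0) := by
      intro j'
      by_cases h : j' = i
      · subst h
        simp [hij]
      · by_cases h2 : j' = j
        · subst h2
          simp only [h, if_false, ContinuousLinearMap.smul_apply,
            ContinuousLinearMap.sub_apply, Pr_apply, Pi.single_apply, smul_eq_mul]
          simp [h, hij]
          exact Or.inl (by ring)
        · simp only [h, h2, if_false, ContinuousLinearMap.smul_apply,
            ContinuousLinearMap.sub_apply, Pr_apply, Pi.single_apply, smul_eq_mul]
          simp [h, h2, hij]
    rw [Finset.sum_congr rfl (fun j' _ => hterm j')]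
    rw [Finset.sum_ite_eq' Finset.univ j]
    simp only [Finset.mem_univ, if_pos]
    ring

theorem statement7 (N : ℕ) (hN : 2 ≤ N) (μ : Fin N → Fin N → ℝ)
    (f : ℝ → (Fin N → ℝ) → Fin N → ℝ)
    (hf : ∀ (L : ℝ) (x : Fin N → ℝ) (i : Fin N),
      f L x i = 2 * x i + L * Real.sin (2 * π * x i) +
        ∑ j, if j = i then 0 else μ i j * Real.sin (2 * π * (x j - x i)))
    (J : ℝ → (Fin N → ℝ) → Matrix (Fin N) (Fin N) ℝ)
    (hJ : ∀ (L : ℝ) (x : Fin N → ℝ) (i j : Fin N),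
      J L x i j = fderiv ℝ (fun y => f L y i) x (Pi.single j 1)) :
    ∃ C : ℝ, 0 < C ∧ ∃ L₀ : ℝ, 0 < L₀ ∧ ∀ L : ℝ, L₀ ≤ L → ∀ x : Fin N → ℝ,
      |(L⁻¹ • J L x).det - (2 * π) ^ N * ∏ i, Real.cos (2 * π * x i)| ≤ C / L := by
  have hπ := Real.pi_pos
  set S : ℝ := ∑ i, ∑ j, |μ i j| with hS_def
  have hS : 0 ≤ S := Finset.sum_nonneg fun _ _ => Finset.sum_nonneg fun _ _ => abs_nonneg _
  set K : ℝ := 2 + 2 * π * S with hK_def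
  have hK2 : (2:ℝ) ≤ K := by nlinarith
  have hK0 : (0:ℝ) < K := by linarith
  set M : ℝ := 2 * π + K with hM_def
  have hM1 : (1:ℝ) ≤ M := by nlinarith
  refine ⟨(Nat.factorial N : ℝ) * (N * M ^ N * K), by positivity, 1, one_pos, ?_⟩
  intro L hL x
  have hL0 : (0:ℝ) < L := lt_of_lt_of_le one_pos hL
  have hf' : ∀ i : Fin N, (fun y => f L y i) = (fun y : Fin N → ℝ => 2 * y i +
      L * Real.sin (2 * π * y i) +
      ∑ j', if j' = i then 0 else μ i j' * Real.sin (2 * π * (y j' - y i))) :=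
    fun i => funext fun y => hf L y i
  have hJ' : ∀ i j, J L x i j =
      (if i = j then 2 + L * (2 * π * Real.cos (2 * π * x i)) -
          ∑ j', (if j' = i then 0 else μ i j' * (2 * π * Real.cos (2 * π * (x j' - x i))))
       else μ i j * (2 * π * Real.cos (2 * π * (x j - x i)))) := by
    intro i j
    rw [hJ L x i j, hf' i, entry_formula]
  have hrow : ∀ i : Fin N, (∑ j', |μ i j'|) ≤ S := by
    intro i
    exact Finset.single_le_sum (f := fun i => ∑ j', |μ i j'|)
      (fun _ _ => Finset.sum_nonneg fun _ _ => abs_nonneg _) (Finset.mem_univ i)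
  have hμS : ∀ i j, |μ i j| ≤ S := fun i j =>
    le_trans (Finset.single_le_sum (f := fun j => |μ i j|)
      (fun _ _ => abs_nonneg _) (Finset.mem_univ j)) (hrow i)
  have hsumbound : ∀ i : Fin N,
      |∑ j', (if j' = i then 0 else μ i j' * (2 * π * Real.cos (2 * π * (x j' - x i))))|
        ≤ 2 * π * S := by
    intro i
    refine (Finset.abs_sum_le_sum_abs _ _).trans ?_
    have hterm : ∀ j' : Fin N,
        |if j' = i then (0:ℝ) else μ i j' * (2 * π * Real.cos (2 * π * (x j' - x i)))|
          ≤ 2 * π * |μ i j'| := by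
      intro j'
      by_cases h : j' = i
      · simp [h]; positivity
      · rw [if_neg h, abs_mul]
        have h1 : |2 * π * Real.cos (2 * π * (x j' - x i))| ≤ 2 * π := by
          rw [abs_mul]
          have := Real.abs_cos_le_one (2 * π * (x j' - x i))
          nlinarith [abs_nonneg (2 * π), abs_of_pos (show (0:ℝ) < 2*π by positivity)]
        calc |μ i j'| * |2 * π * Real.cos (2 * π * (x j' - x i))|
            ≤ |μ i j'| * (2 * π) := mul_le_mul_of_nonneg_left h1 (abs_nonneg _)
          _ = 2 * π * |μ i j'| := by ring
    calc ∑ j', |if j' = i then (0:ℝ) else μ i j' * (2 * π * Real.cos (2 * π * (x j' - x i)))|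
        ≤ ∑ j', 2 * π * |μ i j'| := Finset.sum_le_sum fun j' _ => hterm j'
      _ = 2 * π * ∑ j', |μ i j'| := by rw [Finset.mul_sum]
      _ ≤ 2 * π * S := by nlinarith [hrow i]
  set B : Matrix (Fin N) (Fin N) ℝ := Matrix.diagonal (fun i => 2 * π * Real.cos (2 * π * x i))
    with hB_def
  have hdetB : B.det = (2 * π) ^ N * ∏ i, Real.cos (2 * π * x i) := by
    rw [hB_def, Matrix.det_diagonal, Finset.prod_mul_distrib, Finset.prod_const,
      Finset.card_univ, Fintype.card_fin]
  have hABle : ∀ i j, |(L⁻¹ • J L x) i j - B i j| ≤ K / L := by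
    intro i j
    rw [Matrix.smul_apply, smul_eq_mul, hJ' i j]
    by_cases h : i = j
    · subst h
      rw [if_pos rfl, hB_def, Matrix.diagonal_apply_eq]
      have heq : L⁻¹ * (2 + L * (2 * π * Real.cos (2 * π * x i)) -
          ∑ j', (if j' = i then 0 else μ i j' * (2 * π * Real.cos (2 * π * (x j' - x i)))))
          - 2 * π * Real.cos (2 * π * x i)
          = L⁻¹ * (2 - ∑ j', (if j' = i then 0 else
              μ i j' * (2 * π * Real.cos (2 * π * (x j' - x i))))) := by
        field_simp
        ring
      rw [heq, abs_mul, abs_of_pos (inv_pos.mpr hL0)]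
      rw [div_eq_inv_mul]
      refine mul_le_mul_of_nonneg_left ?_ (inv_pos.mpr hL0).le
      calc |2 - ∑ j', (if j' = i then 0 else μ i j' * (2 * π * Real.cos (2 * π * (x j' - x i))))|
          ≤ |(2:ℝ)| + |∑ j', (if j' = i then 0 else
              μ i j' * (2 * π * Real.cos (2 * π * (x j' - x i))))| := abs_sub _ _
        _ ≤ 2 + 2 * π * S := by
            rw [abs_two]
            linarith [hsumbound i]
        _ = K := hK_def.symm
    · rw [if_neg h, hB_def, Matrix.diagonal_apply_ne _ h, sub_zero, abs_mul,
        abs_of_pos (inv_pos.mpr hL0), div_eq_inv_mul]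
      refine mul_le_mul_of_nonneg_left ?_ (inv_pos.mpr hL0).le
      rw [abs_mul]
      have h1 : |2 * π * Real.cos (2 * π * (x j - x i))| ≤ 2 * π := by
        rw [abs_mul]
        have := Real.abs_cos_le_one (2 * π * (x j - x i))
        nlinarith [abs_of_pos (show (0:ℝ) < 2*π by positivity)]
      calc |μ i j| * |2 * π * Real.cos (2 * π * (x j - x i))|
          ≤ S * (2 * π) := mul_le_mul (hμS i j) h1 (abs_nonneg _) hS
        _ ≤ K := by nlinarith
  have hBle : ∀ i j, |B i j| ≤ M := by
    intro i j
    rw [hB_def]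
    by_cases h : i = j
    · subst h
      rw [Matrix.diagonal_apply_eq, abs_mul]
      have := Real.abs_cos_le_one (2 * π * x i)
      have h2 : |2 * π| = 2 * π := abs_of_pos (by positivity)
      nlinarith [abs_nonneg (2*π)]
    · rw [Matrix.diagonal_apply_ne _ h]
      simp only [abs_zero]
      linarith
  have hKL : K / L ≤ K := div_le_self hK0.le hL
  have hBle2 : ∀ i j, |B i j| ≤ 2 * π := by
    intro i j
    rw [hB_def]
    by_cases h : i = j
    · subst h
      rw [Matrix.diagonal_apply_eq, abs_mul]
      have := Real.abs_cos_le_one (2 * π * x i)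
      have h2 : |2 * π| = 2 * π := abs_of_pos (by positivity)
      nlinarith
    · rw [Matrix.diagonal_apply_ne _ h]
      simp only [abs_zero]
      positivity
  have hAle : ∀ i j, |(L⁻¹ • J L x) i j| ≤ M := by
    intro i j
    have h0 : ((L⁻¹ • J L x) i j - B i j) + B i j = (L⁻¹ • J L x) i j := sub_add_cancel _ _
    calc |(L⁻¹ • J L x) i j| = |((L⁻¹ • J L x) i j - B i j) + B i j| := by rw [h0]
      _ ≤ |(L⁻¹ • J L x) i j - B i j| + |B i j| := abs_add_le _ _
      _ ≤ K / L + 2 * π := add_le_add (hABle i j) (hBle2 i j)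
      _ ≤ M := by rw [hM_def]; linarith
  have hdet := det_sub_bound (L⁻¹ • J L x) B M (K / L) hM1 (by positivity) hAle hBle hABle
  rw [hdetB] at hdet
  calc |(L⁻¹ • J L x).det - (2 * π) ^ N * ∏ i, Real.cos (2 * π * x i)|
      ≤ (Nat.factorial N : ℝ) * (N * M ^ N * (K / L)) := hdet
    _ = (Nat.factorial N : ℝ) * (N * M ^ N * K) / L := by
        field_simp
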